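/- For any point p in a plane point set P with associated radii, and a cone F_p with apex p and opening angle 2π/k with k > 6, among all points q in F_p ∩ P with |qp| ≤ r_q, the point v minimizing d_F(p,·) satisfies: for every other such point u, there is an edge from u to v in the transmission graph (i.e., |uv| ≤ r_u) with |uv| < |up|. -/

import Mathlib

open Real

lemma aux_cone_inner (x b : EuclideanSpace ℝ (Fin 2)) (hb : ‖b‖ = 1) (α : ℝ)
    (hα2 : α < π / 2) (hαπ : α ≤ π)
    (h : InnerProductGeometry.angle x b ≤ α) :
    x ≠ 0 ∧ ‖x‖ * Real.cos α ≤ (inner ℝ x b : ℝ) := by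
  have hx : x ≠ 0 := by
    rintro rfl
    rw [InnerProductGeometry.angle_zero_left] at h
    linarith
  refine ⟨hx, ?_⟩
  have hcos : Real.cos α ≤ Real.cos (InnerProductGeometry.angle x b) :=
    Real.cos_le_cos_of_nonneg_of_le_pi (InnerProductGeometry.angle_nonneg _ _) hαπ h
  have hmul := InnerProductGeometry.cos_angle_mul_norm_mul_norm x b
  rw [hb, mul_one] at hmul
  have h2 := mul_le_mul_of_nonneg_right hcos (norm_nonneg x)
  calc ‖x‖ * Real.cos α = Real.cos α * ‖x‖ := by ring
    _ ≤ Real.cos (InnerProductGeometry.angle x b) * ‖x‖ := h2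
    _ = (inner ℝ x b : ℝ) := hmul

lemma aux_expand (x y b : EuclideanSpace ℝ (Fin 2)) (hbb : (inner ℝ b b : ℝ) = 1) (s t : ℝ) :
    (inner ℝ (x - s • b) (y - t • b) : ℝ)
      = (inner ℝ x y : ℝ) - t * (inner ℝ x b : ℝ) - s * (inner ℝ b y : ℝ) + s * t := by
  simp only [inner_sub_left, inner_sub_right, real_inner_smul_left, real_inner_smul_right, hbb]
  ring

set_option maxHeartbeats 1000000 in
lemma aux_key_arith (X Y s t I PP c : ℝ) (hX : 0 < X) (hY : 0 < Y)
    (hc34 : 3/4 < c ^ 2) (hc0 : 0 < c) (hc1 : c ≤ 1)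
    (hsX : X * c ≤ s) (htY : Y * c ≤ t) (hts : t ≤ s)
    (hXs : 0 ≤ X ^ 2 - s ^ 2) (hYt : 0 ≤ Y ^ 2 - t ^ 2)
    (hPP0 : 0 ≤ PP) (hPPsq : PP ^ 2 = (X ^ 2 - s ^ 2) * (Y ^ 2 - t ^ 2))
    (hPI : s * t - PP ≤ I) : Y ^ 2 < 2 * I := by
  have hs : 0 < s := lt_of_lt_of_le (by positivity) hsX
  have ht : 0 < t := lt_of_lt_of_le (by positivity) htY
  have hXc : X ^ 2 * c ^ 2 ≤ s ^ 2 := by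
    nlinarith [mul_le_mul hsX hsX (by positivity : (0:ℝ) ≤ X * c) hs.le]
  have hYc : Y ^ 2 * c ^ 2 ≤ t ^ 2 := by
    nlinarith [mul_le_mul htY htY (by positivity : (0:ℝ) ≤ Y * c) ht.le]
  have h1 : (X ^ 2 - s ^ 2) * c ^ 2 ≤ s ^ 2 * (1 - c ^ 2) := by nlinarith
  have h2 : (Y ^ 2 - t ^ 2) * c ^ 2 ≤ t ^ 2 * (1 - c ^ 2) := by nlinarith
  have hc2 : c ^ 2 ≤ 1 := by nlinarith [mul_le_mul hc1 hc1 hc0.le zero_le_one]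
  have hc2' : (0:ℝ) ≤ 1 - c ^ 2 := by linarith
  have hB0 : 0 ≤ s * t * (1 - c ^ 2) := mul_nonneg (mul_pos hs ht).le hc2'
  have hA0 : 0 ≤ PP * c ^ 2 := by positivity
  have hbig := mul_le_mul h1 h2 (mul_nonneg hYt (sq_nonneg c))
    (mul_nonneg (sq_nonneg s) hc2')
  have hsq : (PP * c ^ 2) ^ 2 ≤ (s * t * (1 - c ^ 2)) ^ 2 := by
    calc (PP * c ^ 2) ^ 2 = (X ^ 2 - s ^ 2) * c ^ 2 * ((Y ^ 2 - t ^ 2) * c ^ 2) := by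
          linear_combination (c ^ 2 * c ^ 2) * hPPsq
      _ ≤ s ^ 2 * (1 - c ^ 2) * (t ^ 2 * (1 - c ^ 2)) := hbig
      _ = (s * t * (1 - c ^ 2)) ^ 2 := by ring
  have hPc : PP * c ^ 2 ≤ s * t * (1 - c ^ 2) :=
    (pow_le_pow_iff_left₀ hA0 hB0 (by norm_num : (2:ℕ) ≠ 0)).mp hsq
  have hPIc := mul_le_mul_of_nonneg_right hPI (sq_nonneg c)
  have ht2 : t ^ 2 ≤ s * t := by nlinarith [mul_le_mul_of_nonneg_right hts ht.le]
  have e2 : s * t * 1 < s * t * (4 * c ^ 2 - 2) :=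
    mul_lt_mul_of_pos_left (by linarith) (mul_pos hs ht)
  have e3 : s * t * (4 * c ^ 2 - 2) ≤ 2 * I * c ^ 2 := by nlinarith [hPc, hPIc]
  have e4 : Y ^ 2 * c ^ 2 < (2 * I) * c ^ 2 := by nlinarith [hYc, ht2, e2, e3]
  exact lt_of_mul_lt_mul_right e4 (pow_pos hc0 2).le

set_option maxHeartbeats 1000000 in
theorem stmt_1 (P : Finset (EuclideanSpace ℝ (Fin 2))) (r : EuclideanSpace ℝ (Fin 2) → ℝ)
    (hr : ∀ q ∈ P, 0 < r q)
    (p b : EuclideanSpace ℝ (Fin 2)) (hp : p ∈ P) (hb : ‖b‖ = 1)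
    (k : ℕ) (hk : 6 < k)
    (v : EuclideanSpace ℝ (Fin 2)) (hvP : v ∈ P)
    (hvC : InnerProductGeometry.angle (v - p) b ≤ π / (k : ℝ))
    (hvE : dist v p ≤ r v)
    (hmin : ∀ q ∈ P, InnerProductGeometry.angle (q - p) b ≤ π / (k : ℝ) → dist q p ≤ r q →
      (inner ℝ (v - p) b : ℝ) ≤ (inner ℝ (q - p) b : ℝ)) :
    ∀ u ∈ P, InnerProductGeometry.angle (u - p) b ≤ π / (k : ℝ) → dist u p ≤ r u → u ≠ v →
      dist u v ≤ r u ∧ dist u v < dist u p := by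
  intro u hu huC huE huv
  have hπ : (0:ℝ) < π := Real.pi_pos
  have hk7 : (7:ℝ) ≤ (k:ℝ) := by exact_mod_cast hk
  set α : ℝ := π / (k : ℝ) with hαdef
  have hα6 : α < π / 6 := by
    rw [hαdef]
    apply div_lt_div_of_pos_left hπ (by norm_num) (by linarith)
  have hα2 : α < π / 2 := by linarith
  have hαπ : α ≤ π := by linarith
  have hα0 : 0 < α := by rw [hαdef]; positivity
  have hc0 : 0 < Real.cos α := Real.cos_pos_of_mem_Ioo ⟨by linarith, hα2⟩
  have hc6 : Real.cos (π/6) < Real.cos α :=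
    Real.cos_lt_cos_of_nonneg_of_le_pi hα0.le (by linarith) hα6
  rw [Real.cos_pi_div_six] at hc6
  have hc34 : (3:ℝ)/4 < Real.cos α ^ 2 := by
    have h34 : (Real.sqrt 3 / 2) ^ 2 = 3/4 := by
      rw [div_pow, Real.sq_sqrt (by norm_num : (3:ℝ) ≥ 0)]; norm_num
    calc (3:ℝ)/4 = (Real.sqrt 3 / 2) ^ 2 := h34.symm
      _ < Real.cos α ^ 2 := by
          apply pow_lt_pow_left₀ hc6 (by positivity) (by norm_num)
  have hc1 : Real.cos α ≤ 1 := Real.cos_le_one α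
  obtain ⟨hx0, hsX⟩ := aux_cone_inner (u - p) b hb α hα2 hαπ huC
  obtain ⟨hy0, htY⟩ := aux_cone_inner (v - p) b hb α hα2 hαπ hvC
  have hX : 0 < ‖u - p‖ := norm_pos_iff.mpr hx0
  have hY : 0 < ‖v - p‖ := norm_pos_iff.mpr hy0
  have hts : (inner ℝ (v - p) b : ℝ) ≤ (inner ℝ (u - p) b : ℝ) := hmin u hu huC huE
  have hbb : (inner ℝ b b : ℝ) = 1 := by
    rw [real_inner_self_eq_norm_sq, hb]; norm_num
  set s : ℝ := (inner ℝ (u - p) b : ℝ) with hsdef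
  set t : ℝ := (inner ℝ (v - p) b : ℝ) with htdef
  have hs : 0 < s := lt_of_lt_of_le (by positivity) hsX
  have ht : 0 < t := lt_of_lt_of_le (by positivity) htY
  have hxp : ‖(u - p) - s • b‖ ^ 2 = ‖u - p‖ ^ 2 - s ^ 2 := by
    rw [norm_sub_sq_real, real_inner_smul_right, norm_smul, ← hsdef]
    simp [hb, mul_pow]
    ring
  have hyp : ‖(v - p) - t • b‖ ^ 2 = ‖v - p‖ ^ 2 - t ^ 2 := by
    rw [norm_sub_sq_real, real_inner_smul_right, norm_smul, ← htdef]
    simp [hb, mul_pow]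
    ring
  set I : ℝ := (inner ℝ (u - p) (v - p) : ℝ) with hIdef
  have hinner : (inner ℝ ((u - p) - s • b) ((v - p) - t • b) : ℝ) = I - s * t := by
    rw [aux_expand _ _ _ hbb, real_inner_comm (v - p) b, ← hsdef, ← htdef, ← hIdef]
    ring
  set PP : ℝ := ‖(u - p) - s • b‖ * ‖(v - p) - t • b‖ with hPPdef
  have hPP0 : 0 ≤ PP := by positivity
  have hPI : s * t - PP ≤ I := by
    have habs := abs_real_inner_le_norm ((u - p) - s • b) ((v - p) - t • b)
    rw [hinner, ← hPPdef] at habs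
    linarith [(abs_le.mp habs).1]
  have hPPsq : PP ^ 2 = (‖u - p‖ ^ 2 - s ^ 2) * (‖v - p‖ ^ 2 - t ^ 2) := by
    rw [hPPdef, mul_pow, hxp, hyp]
  have hXs : 0 ≤ ‖u - p‖ ^ 2 - s ^ 2 := by rw [← hxp]; positivity
  have hYt : 0 ≤ ‖v - p‖ ^ 2 - t ^ 2 := by rw [← hyp]; positivity
  have hkey : ‖v - p‖ ^ 2 < 2 * I :=
    aux_key_arith ‖u - p‖ ‖v - p‖ s t I PP (Real.cos α) hX hY hc34 hc0 hc1
      hsX htY hts hXs hYt hPP0 hPPsq hPI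
  have hsq2 : ‖(u - p) - (v - p)‖ ^ 2 = ‖u - p‖ ^ 2 - 2 * I + ‖v - p‖ ^ 2 :=
    norm_sub_sq_real _ _
  have hsqlt : ‖(u - p) - (v - p)‖ ^ 2 < ‖u - p‖ ^ 2 := by
    rw [hsq2]; linarith
  have hdist : ‖(u - p) - (v - p)‖ < ‖u - p‖ :=
    lt_of_pow_lt_pow_left₀ 2 (norm_nonneg _) hsqlt
  have huvlt : dist u v < dist u p := by
    rw [dist_eq_norm, dist_eq_norm]
    rw [show u - v = (u - p) - (v - p) by abel]
    exact hdist
  exact ⟨le_trans huvlt.le (by rwa [dist_eq_norm] at huE ⊢), huvlt⟩
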